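/- Let A be an integral domain of characteristic 0 and let h(z) = 1 + 2a_1 z/1! + 2a_2 z^2/2! + 2a_3 z^3/3! + ... be a formal power series with all a_j ∈ A. Then the unique formal power series φ(z) with constant term 1 satisfying φ(z)^2 = h(z) is Hurwitz integral over A, i.e., every coefficient of φ is of the form c_n/n! with c_n ∈ A. -/

import Mathlib

lemma even_central (m : ℕ) (hm : 1 ≤ m) : 2 ∣ (2 * m).choose m := by
  obtain ⟨k, rfl⟩ := Nat.exists_eq_add_of_le hm
  have h1 : (2 * (1 + k)) = (2 * k + 1) + 1 := by ring
  have h2 : 1 + k = k + 1 := by ring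
  rw [h1, h2, Nat.choose_succ_succ, Nat.choose_symm_half]
  exact ⟨(2 * k + 1).choose k, by ring⟩

lemma key_dvd (A : Type*) [CommRing A] (n : ℕ) (hn : 1 ≤ n) (c : ℕ → A) :
    (2 : A) ∣ ∑ i ∈ Finset.Ico 1 n, (n.choose i : A) * c i * c (n - i) := by
  let I : Ideal A := Ideal.span {2}
  let π := Ideal.Quotient.mk I
  rw [← Ideal.mem_span_singleton, ← Ideal.Quotient.eq_zero_iff_mem (I := I)]
  have h2 : (Ideal.Quotient.mk I) (2 : A) = 0 :=
    Ideal.Quotient.eq_zero_iff_mem.mpr (Ideal.mem_span_singleton_self 2)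
  rw [map_sum]
  refine Finset.sum_involution (fun i _ => n - i) ?_ ?_ ?_ ?_
  · intro i hi
    simp only [Finset.mem_Ico] at hi
    have hle : i ≤ n := le_of_lt hi.2
    have hsub : n - (n - i) = i := Nat.sub_sub_self hle
    have hcs : n.choose (n - i) = n.choose i := Nat.choose_symm hle
    rw [hsub, hcs, ← map_add]
    have : (n.choose i : A) * c i * c (n - i) + (n.choose i : A) * c (n - i) * c i
        = 2 * ((n.choose i : A) * c i * c (n - i)) := by ring
    rw [this, map_mul, h2, zero_mul]
  · intro i hi hne hfix
    simp only [Finset.mem_Ico] at hi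
    apply hne
    have hn2 : n = 2 * i := by omega
    obtain ⟨k, hk⟩ := even_central i hi.1
    rw [hn2, hk]
    push_cast
    rw [map_mul, map_mul, map_mul, h2]
    ring
  · intro i hi
    simp only [Finset.mem_Ico] at hi ⊢
    omega
  · intro i hi
    simp only [Finset.mem_Ico] at hi
    omega


/-- **Square-root lemma for Hurwitz-integral series.**
Let `A` be an integral domain of characteristic 0, with fraction field `K`.
If `h(z) = 1 + 2a₁ z/1! + 2a₂ z²/2! + ⋯` with all `aⱼ ∈ A`, then the unique
power series `φ` with constant term `1` and `φ² = h` is Hurwitz integral over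
`A`: every coefficient of `φ` is of the form `c_n / n!` with `c_n ∈ A`. -/
theorem statement0 (A : Type*) [CommRing A] [IsDomain A] [CharZero A]
    (a : ℕ → A) (h : PowerSeries (FractionRing A))
    (hh0 : PowerSeries.constantCoeff h = 1)
    (hh : ∀ j : ℕ, 1 ≤ j → PowerSeries.coeff j h =
      2 * algebraMap A (FractionRing A) (a j) / (j.factorial : FractionRing A))
    (φ : PowerSeries (FractionRing A))
    (hφ0 : PowerSeries.constantCoeff φ = 1)
    (hφ : φ ^ 2 = h) :
    ∀ n : ℕ, ∃ c : A, PowerSeries.coeff n φ =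
      algebraMap A (FractionRing A) c / (n.factorial : FractionRing A) := by
  intro n
  induction n using Nat.strong_induction_on with
  | _ n IH =>
  rcases Nat.eq_zero_or_pos n with rfl | hn
  · exact ⟨1, by simp [PowerSeries.coeff_zero_eq_constantCoeff, hφ0]⟩
  choose cc hcc using IH
  set c : ℕ → A := fun i => if hi : i < n then cc i hi else 0 with hc
  have hcoef : ∀ i, i < n → PowerSeries.coeff i φ
      = algebraMap A (FractionRing A) (c i) / (i.factorial : FractionRing A) := by
    intro i hi
    simp only [hc, dif_pos hi]
    exact hcc i hi
  obtain ⟨T, hT⟩ := key_dvd A n hn c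
  refine ⟨a n - T, ?_⟩
  have hfac : ∀ m : ℕ, ((m.factorial : FractionRing A)) ≠ 0 := fun m =>
    Nat.cast_ne_zero.mpr (Nat.factorial_ne_zero m)
  have h2K : (2 : FractionRing A) ≠ 0 := two_ne_zero
  have E : ∑ i ∈ Finset.range (n + 1),
      PowerSeries.coeff i φ * PowerSeries.coeff (n - i) φ
      = 2 * algebraMap A (FractionRing A) (a n) / (n.factorial : FractionRing A) := by
    rw [← Finset.Nat.sum_antidiagonal_eq_sum_range_succ_mk
      (fun ij => PowerSeries.coeff ij.1 φ
        * PowerSeries.coeff ij.2 φ),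
      ← PowerSeries.coeff_mul, ← sq, hφ]
    exact hh n hn
  rw [Finset.range_eq_Ico, Finset.sum_eq_sum_Ico_succ_bot (by omega)] at E
  rw [Finset.sum_Ico_succ_top (by omega : 1 ≤ n)] at E
  have hφ0' : PowerSeries.coeff 0 φ = 1 := by
    rw [PowerSeries.coeff_zero_eq_constantCoeff]; exact hφ0
  rw [Nat.sub_zero, Nat.sub_self, hφ0'] at E
  have hmid : ∑ i ∈ Finset.Ico 1 n,
      PowerSeries.coeff i φ * PowerSeries.coeff (n - i) φ
      = algebraMap A (FractionRing A) (2 * T) / (n.factorial : FractionRing A) := by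
    rw [← hT, map_sum, Finset.sum_div]
    refine Finset.sum_congr rfl ?_
    intro i hi
    simp only [Finset.mem_Ico] at hi
    rw [hcoef i (by omega), hcoef (n - i) (by omega), map_mul, map_mul, map_natCast]
    have hch : ((n.factorial : FractionRing A)) = (n.choose i : FractionRing A)
        * (i.factorial : FractionRing A) * ((n - i).factorial : FractionRing A) := by
      exact_mod_cast (Nat.choose_mul_factorial_mul_factorial (le_of_lt hi.2)).symm
    have hchoose : ((n.choose i : FractionRing A)) ≠ 0 :=
      Nat.cast_ne_zero.mpr (Nat.choose_pos (le_of_lt hi.2)).ne'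
    rw [div_mul_div_comm, hch]
    rw [div_eq_div_iff (mul_ne_zero (hfac i) (hfac (n-i))) (mul_ne_zero (mul_ne_zero hchoose (hfac i)) (hfac (n-i)))]
    ring
  rw [hmid, map_mul] at E
  have hm2 : algebraMap A (FractionRing A) 2 = 2 := by rw [map_ofNat]
  rw [hm2] at E
  rw [map_sub]
  have hn' := hfac n
  field_simp at E
  rw [eq_div_iff hn']
  linear_combination E / 2
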